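/- Let A ∈ ASM(n). Then Ess(A) equals the set of pairs (i,j) with 1 ≤ i,j ≤ n−1 such that r_A(i,j) = r_A(i−1,j) = r_A(i,j−1) and r_A(i,j) + 1 = r_A(i+1,j) = r_A(i,j+1); in particular Ess(A) contains no cell in row n or column n. -/

import Mathlib

/-- The entry of an `n × n` integer matrix in 1-based coordinates;
`0` outside the grid `[1,n] × [1,n]`. -/
def entry1 {n : ℕ} (A : Matrix (Fin n) (Fin n) ℤ) (i j : ℕ) : ℤ :=
  if h : 1 ≤ i ∧ i ≤ n ∧ 1 ≤ j ∧ j ≤ n then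
    A ⟨i - 1, by omega⟩ ⟨j - 1, by omega⟩ else 0

/-- The corner sum `r_A(i,j) = ∑_{k ≤ i} ∑_{l ≤ j} a_{k l}` (1-based). -/
def cornerSum {n : ℕ} (A : Matrix (Fin n) (Fin n) ℤ) (i j : ℕ) : ℤ :=
  ∑ k ∈ Finset.Icc 1 i, ∑ l ∈ Finset.Icc 1 j, entry1 A k l

/-- Partial row sum `∑_{l=1}^{j} a_{i l}`. -/
def rowPartial {n : ℕ} (A : Matrix (Fin n) (Fin n) ℤ) (i j : ℕ) : ℤ :=
  ∑ l ∈ Finset.Icc 1 j, entry1 A i l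

/-- Partial column sum `∑_{k=1}^{i} a_{k j}`. -/
def colPartial {n : ℕ} (A : Matrix (Fin n) (Fin n) ℤ) (i j : ℕ) : ℤ :=
  ∑ k ∈ Finset.Icc 1 i, entry1 A k j

/-- `A` is an alternating sign matrix: every partial row and column sum is `0`
or `1`, and every full row and column sums to `1`. -/
def IsASM {n : ℕ} (A : Matrix (Fin n) (Fin n) ℤ) : Prop :=
  (∀ i j : ℕ, rowPartial A i j = 0 ∨ rowPartial A i j = 1) ∧
  (∀ i j : ℕ, colPartial A i j = 0 ∨ colPartial A i j = 1) ∧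
  (∀ i : ℕ, 1 ≤ i → i ≤ n → rowPartial A i n = 1) ∧
  (∀ j : ℕ, 1 ≤ j → j ≤ n → colPartial A n j = 1)

/-- `A` is a partial alternating sign matrix: every partial row and column sum
is `0` or `1`. -/
def IsPartialASM {n : ℕ} (A : Matrix (Fin n) (Fin n) ℤ) : Prop :=
  (∀ i j : ℕ, rowPartial A i j = 0 ∨ rowPartial A i j = 1) ∧
  (∀ i j : ℕ, colPartial A i j = 0 ∨ colPartial A i j = 1)

/-- `(i,j)` (1-based) is in the Rothe diagram `D(A)`:
`∑_{k > i, l > j} a_{i l} a_{k j} = 1`. -/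
def InDiagram {n : ℕ} (A : Matrix (Fin n) (Fin n) ℤ) (i j : ℕ) : Prop :=
  (∑ k ∈ Finset.Icc 1 n, ∑ l ∈ Finset.Icc 1 n,
    (if i < k ∧ j < l then entry1 A i l * entry1 A k j else 0)) = 1

/-- `(i,j)` is in the essential set `Ess(A)`. -/
def InEss {n : ℕ} (A : Matrix (Fin n) (Fin n) ℤ) (i j : ℕ) : Prop :=
  InDiagram A i j ∧ ¬ InDiagram A (i + 1) j ∧ ¬ InDiagram A i (j + 1)

/-- The permutation matrix of `w` (a `1` in positions `(a, w a)`). -/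
def permMatrix {n : ℕ} (w : Equiv.Perm (Fin n)) : Matrix (Fin n) (Fin n) ℤ :=
  Matrix.of fun a b => if w a = b then 1 else 0

/-- The value `w(a)` of the permutation `w` in 1-based coordinates, extended by
the identity outside `[1,n]`. -/
def pval {n : ℕ} (w : Equiv.Perm (Fin n)) (a : ℕ) : ℕ :=
  if h : 1 ≤ a ∧ a ≤ n then ((w ⟨a - 1, by omega⟩ : Fin n) : ℕ) + 1 else a

/-- The value function (1-based) of the biGrassmannian permutation `[i,j,r]_b`. -/
def biGrFun (i j r a : ℕ) : ℕ :=
  if a ≤ r then a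
  else if a ≤ i then a + (j - r)
  else if a ≤ i + j - r then a - (i - r)
  else a

/-- The permutation matrix of the biGrassmannian permutation `[i,j,r]_b ∈ S_n`. -/
def biGrMatrix (n i j r : ℕ) : Matrix (Fin n) (Fin n) ℤ :=
  Matrix.of fun a b => if biGrFun i j r ((a : ℕ) + 1) = (b : ℕ) + 1 then 1 else 0

/-- `u ∈ S_n` is the biGrassmannian permutation `[i,j,r]_b`, i.e. its values
are given by the defining formula. -/
def IsBiGrPerm (n i j r : ℕ) (u : Equiv.Perm (Fin n)) : Prop :=
  ∀ a : ℕ, 1 ≤ a → a ≤ n → pval u a = biGrFun i j r a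

/-- `(a,b)` (1-based) is in the Rothe diagram of the permutation `w`:
`w(a) > b` and `w⁻¹(b) > a`. -/
def InPermDiagram {n : ℕ} (w : Equiv.Perm (Fin n)) (a b : ℕ) : Prop :=
  1 ≤ a ∧ a ≤ n ∧ 1 ≤ b ∧ b ≤ n ∧ b < pval w a ∧ a < pval w⁻¹ b

/-- `(a,b)` is in the essential set of the permutation `w`. -/
def InPermEss {n : ℕ} (w : Equiv.Perm (Fin n)) (a b : ℕ) : Prop :=
  InPermDiagram w a b ∧ ¬ InPermDiagram w (a + 1) b ∧ ¬ InPermDiagram w a (b + 1)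

/-- `w` has a descent at (1-based) position `d`: `w(d) > w(d+1)`. -/
def HasDescentAt {n : ℕ} (w : Equiv.Perm (Fin n)) (d : ℕ) : Prop :=
  1 ≤ d ∧ d < n ∧ pval w (d + 1) < pval w d

/-- `u` is biGrassmannian: both `u` and `u⁻¹` have a unique descent. -/
def IsBiGrassmannian {n : ℕ} (u : Equiv.Perm (Fin n)) : Prop :=
  (∃! d : ℕ, HasDescentAt u d) ∧ (∃! d : ℕ, HasDescentAt u⁻¹ d)

section Stmt2Aux

variable {n : ℕ} (A : Matrix (Fin n) (Fin n) ℤ)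

lemma entry1_eq_zero_left {i : ℕ} (h : ¬ (1 ≤ i ∧ i ≤ n)) (j : ℕ) :
    entry1 A i j = 0 := by
  unfold entry1; rw [dif_neg]; tauto

lemma entry1_eq_zero_right (i : ℕ) {j : ℕ} (h : ¬ (1 ≤ j ∧ j ≤ n)) :
    entry1 A i j = 0 := by
  unfold entry1; rw [dif_neg]; tauto

lemma rowPartial_succ (i j : ℕ) :
    rowPartial A i (j + 1) = rowPartial A i j + entry1 A i (j + 1) :=
  Finset.sum_Icc_succ_top (by omega) _

lemma colPartial_succ (i j : ℕ) :
    colPartial A (i + 1) j = colPartial A i j + entry1 A (i + 1) j :=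
  Finset.sum_Icc_succ_top (by omega) _

lemma cornerSum_succ_row (i j : ℕ) :
    cornerSum A (i + 1) j = cornerSum A i j + rowPartial A (i + 1) j :=
  Finset.sum_Icc_succ_top (by omega) _

lemma cornerSum_succ_col (i j : ℕ) :
    cornerSum A i (j + 1) = cornerSum A i j + colPartial A i (j + 1) := by
  unfold cornerSum colPartial
  have h : ∀ k, ∑ l ∈ Finset.Icc 1 (j + 1), entry1 A k l
      = (∑ l ∈ Finset.Icc 1 j, entry1 A k l) + entry1 A k (j + 1) := fun k =>
    Finset.sum_Icc_succ_top (by omega) _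
  simp_rw [h]
  rw [Finset.sum_add_distrib]

lemma sum_ite_gt_row {j : ℕ} (i : ℕ) (hj : j ≤ n) :
    ∑ l ∈ Finset.Icc 1 n, (if j < l then entry1 A i l else 0)
      = rowPartial A i n - rowPartial A i j := by
  have h1 : ∑ l ∈ Finset.Icc 1 n, (if j < l then entry1 A i l else 0)
      = ∑ l ∈ Finset.Ioc j n, entry1 A i l := by
    rw [← Finset.sum_subset (s₁ := Finset.Ioc j n)
      (fun x hx => by simp only [Finset.mem_Ioc] at hx; simp only [Finset.mem_Icc]; omega)
      (fun x _ hx => by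
        rw [if_neg]; intro hc; exact hx (Finset.mem_Ioc.mpr ⟨hc, (Finset.mem_Icc.mp ‹_›).2⟩))]
    exact Finset.sum_congr rfl fun x hx => if_pos (Finset.mem_Ioc.mp hx).1
  rw [h1]
  unfold rowPartial
  have h2 : Finset.Icc 1 n = Finset.Ioc 0 n := by rw [← Finset.Icc_add_one_left_eq_Ioc]; rfl
  have h3 : Finset.Icc 1 j = Finset.Ioc 0 j := by rw [← Finset.Icc_add_one_left_eq_Ioc]; rfl
  rw [h2, h3, ← Finset.sum_Ioc_consecutive _ (Nat.zero_le j) hj]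
  ring

lemma sum_ite_gt_col {i : ℕ} (hi : i ≤ n) (j : ℕ) :
    ∑ k ∈ Finset.Icc 1 n, (if i < k then entry1 A k j else 0)
      = colPartial A n j - colPartial A i j := by
  have h1 : ∑ k ∈ Finset.Icc 1 n, (if i < k then entry1 A k j else 0)
      = ∑ k ∈ Finset.Ioc i n, entry1 A k j := by
    rw [← Finset.sum_subset (s₁ := Finset.Ioc i n)
      (fun x hx => by simp only [Finset.mem_Ioc] at hx; simp only [Finset.mem_Icc]; omega)
      (fun x _ hx => by
        rw [if_neg]; intro hc; exact hx (Finset.mem_Ioc.mpr ⟨hc, (Finset.mem_Icc.mp ‹_›).2⟩))]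
    exact Finset.sum_congr rfl fun x hx => if_pos (Finset.mem_Ioc.mp hx).1
  rw [h1]
  unfold colPartial
  have h2 : Finset.Icc 1 n = Finset.Ioc 0 n := by rw [← Finset.Icc_add_one_left_eq_Ioc]; rfl
  have h3 : Finset.Icc 1 i = Finset.Ioc 0 i := by rw [← Finset.Icc_add_one_left_eq_Ioc]; rfl
  rw [h2, h3, ← Finset.sum_Ioc_consecutive _ (Nat.zero_le i) hi]
  ring

lemma diagram_sum_eq (hA : IsASM A) {i j : ℕ} (hi1 : 1 ≤ i) (hi2 : i ≤ n)
    (hj1 : 1 ≤ j) (hj2 : j ≤ n) :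
    (∑ k ∈ Finset.Icc 1 n, ∑ l ∈ Finset.Icc 1 n,
      (if i < k ∧ j < l then entry1 A i l * entry1 A k j else 0))
    = (1 - rowPartial A i j) * (1 - colPartial A i j) := by
  have key : ∀ k l : ℕ, (if i < k ∧ j < l then entry1 A i l * entry1 A k j else 0)
      = (if i < k then entry1 A k j else 0) * (if j < l then entry1 A i l else 0) := by
    intro k l
    by_cases h1 : i < k <;> by_cases h2 : j < l <;> simp [h1, h2, mul_comm]
  simp_rw [key, ← Finset.mul_sum, ← Finset.sum_mul]
  rw [sum_ite_gt_row A i hj2, sum_ite_gt_col A hi2 j,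
    hA.2.2.1 i hi1 hi2, hA.2.2.2 j hj1 hj2]
  ring

lemma not_inDiagram_of_out {i j : ℕ} (h : ¬ (1 ≤ i ∧ i ≤ n ∧ 1 ≤ j ∧ j ≤ n)) :
    ¬ InDiagram A i j := by
  unfold InDiagram
  have hz : ∀ k l : ℕ, (if i < k ∧ j < l then entry1 A i l * entry1 A k j else 0) = 0 := by
    intro k l
    by_cases hi : 1 ≤ i ∧ i ≤ n
    · have hj : ¬ (1 ≤ j ∧ j ≤ n) := by tauto
      rw [entry1_eq_zero_right A k hj, mul_zero, ite_self]
    · rw [entry1_eq_zero_left A hi l, zero_mul, ite_self]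
  simp_rw [hz]
  simp

lemma inDiagram_iff (hA : IsASM A) {i j : ℕ} (hi1 : 1 ≤ i) (hi2 : i ≤ n)
    (hj1 : 1 ≤ j) (hj2 : j ≤ n) :
    InDiagram A i j ↔ rowPartial A i j = 0 ∧ colPartial A i j = 0 := by
  unfold InDiagram
  rw [diagram_sum_eq A hA hi1 hi2 hj1 hj2]
  rcases hA.1 i j with h1 | h1 <;> rcases hA.2.1 i j with h2 | h2 <;>
    rw [h1, h2] <;> norm_num

end Stmt2Aux

/-- For an ASM `A`, `Ess(A)` equals the set of pairs `(i,j)` with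
`1 ≤ i,j ≤ n-1` such that `r_A(i,j) = r_A(i-1,j) = r_A(i,j-1)` and
`r_A(i,j) + 1 = r_A(i+1,j) = r_A(i,j+1)`; in particular `Ess(A)` contains no
cell in row `n` or column `n`. -/
theorem stmt2 {n : ℕ} (A : Matrix (Fin n) (Fin n) ℤ) (hA : IsASM A) :
    ∀ i j : ℕ, InEss A i j ↔
      (1 ≤ i ∧ i + 1 ≤ n ∧ 1 ≤ j ∧ j + 1 ≤ n ∧
       cornerSum A i j = cornerSum A (i - 1) j ∧
       cornerSum A i j = cornerSum A i (j - 1) ∧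
       cornerSum A i j + 1 = cornerSum A (i + 1) j ∧
       cornerSum A i j + 1 = cornerSum A i (j + 1)) := by
  intro i j
  constructor
  · rintro ⟨hd, hd1, hd2⟩
    have hbnd : 1 ≤ i ∧ i ≤ n ∧ 1 ≤ j ∧ j ≤ n := by
      by_contra h; exact not_inDiagram_of_out A h hd
    obtain ⟨hi1, hi2, hj1, hj2⟩ := hbnd
    obtain ⟨hrp, hcp⟩ := (inDiagram_iff A hA hi1 hi2 hj1 hj2).mp hd
    have hin : i + 1 ≤ n := by
      rcases Nat.lt_or_ge i n with h | h
      · omega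
      · exfalso
        have heq : i = n := by omega
        subst heq
        have := hA.2.2.2 j hj1 hj2
        omega
    have hjn : j + 1 ≤ n := by
      rcases Nat.lt_or_ge j n with h | h
      · omega
      · exfalso
        have heq : j = n := by omega
        subst heq
        have := hA.2.2.1 i hi1 hi2
        omega
    obtain ⟨p, rfl⟩ : ∃ p, i = p + 1 := ⟨i - 1, by omega⟩
    obtain ⟨m, rfl⟩ : ∃ m, j = m + 1 := ⟨j - 1, by omega⟩
    have hnd1 : ¬ (rowPartial A (p + 2) (m + 1) = 0 ∧ colPartial A (p + 2) (m + 1) = 0) :=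
      fun h => hd1 ((inDiagram_iff A hA (by omega) (by omega) hj1 hj2).mpr h)
    have hnd2 : ¬ (rowPartial A (p + 1) (m + 2) = 0 ∧ colPartial A (p + 1) (m + 2) = 0) :=
      fun h => hd2 ((inDiagram_iff A hA hi1 hi2 (by omega) (by omega)).mpr h)
    -- rowPartial at (i+1, j) is 1
    have hrp1 : rowPartial A (p + 2) (m + 1) = 1 := by
      have h1 := hA.1 (p + 2) (m + 1)
      have h2 := hA.2.1 (p + 2) (m + 1)
      rcases h1 with h1 | h1
      · have h2' : colPartial A (p + 2) (m + 1) = 1 := by tauto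
        have he : colPartial A (p + 2) (m + 1)
            = colPartial A (p + 1) (m + 1) + entry1 A (p + 2) (m + 1) :=
          colPartial_succ A (p + 1) (m + 1)
        have hent : entry1 A (p + 2) (m + 1) = 1 := by omega
        have hr := rowPartial_succ A (p + 2) m
        have h3 := hA.1 (p + 2) m
        omega
      · exact h1
    -- colPartial at (i, j+1) is 1
    have hcp1 : colPartial A (p + 1) (m + 2) = 1 := by
      have h1 := hA.1 (p + 1) (m + 2)
      have h2 := hA.2.1 (p + 1) (m + 2)
      rcases h2 with h2 | h2
      · have h1' : rowPartial A (p + 1) (m + 2) = 1 := by tauto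
        have he : rowPartial A (p + 1) (m + 2)
            = rowPartial A (p + 1) (m + 1) + entry1 A (p + 1) (m + 2) :=
          rowPartial_succ A (p + 1) (m + 1)
        have hent : entry1 A (p + 1) (m + 2) = 1 := by omega
        have hc := colPartial_succ A p (m + 2)
        have h3 := hA.2.1 p (m + 2)
        omega
      · exact h2
    have e1 := cornerSum_succ_row A p (m + 1)
    have e2 := cornerSum_succ_col A (p + 1) m
    have e3 : cornerSum A (p + 2) (m + 1)
        = cornerSum A (p + 1) (m + 1) + rowPartial A (p + 2) (m + 1) :=
      cornerSum_succ_row A (p + 1) (m + 1)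
    have e4 : cornerSum A (p + 1) (m + 2)
        = cornerSum A (p + 1) (m + 1) + colPartial A (p + 1) (m + 2) :=
      cornerSum_succ_col A (p + 1) (m + 1)
    refine ⟨by omega, hin, by omega, hjn, ?_, ?_, ?_, ?_⟩
    · show cornerSum A (p + 1) (m + 1) = cornerSum A p (m + 1); omega
    · show cornerSum A (p + 1) (m + 1) = cornerSum A (p + 1) m; omega
    · show cornerSum A (p + 1) (m + 1) + 1 = cornerSum A (p + 2) (m + 1); omega
    · show cornerSum A (p + 1) (m + 1) + 1 = cornerSum A (p + 1) (m + 2); omega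
  · rintro ⟨hi1, hin, hj1, hjn, c1, c2, c3, c4⟩
    obtain ⟨p, rfl⟩ : ∃ p, i = p + 1 := ⟨i - 1, by omega⟩
    obtain ⟨m, rfl⟩ : ∃ m, j = m + 1 := ⟨j - 1, by omega⟩
    have c1' : cornerSum A (p + 1) (m + 1) = cornerSum A p (m + 1) := c1
    have c2' : cornerSum A (p + 1) (m + 1) = cornerSum A (p + 1) m := c2
    have c3' : cornerSum A (p + 1) (m + 1) + 1 = cornerSum A (p + 2) (m + 1) := c3
    have c4' : cornerSum A (p + 1) (m + 1) + 1 = cornerSum A (p + 1) (m + 2) := c4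
    have e1 := cornerSum_succ_row A p (m + 1)
    have e2 := cornerSum_succ_col A (p + 1) m
    have e3 : cornerSum A (p + 2) (m + 1)
        = cornerSum A (p + 1) (m + 1) + rowPartial A (p + 2) (m + 1) :=
      cornerSum_succ_row A (p + 1) (m + 1)
    have e4 : cornerSum A (p + 1) (m + 2)
        = cornerSum A (p + 1) (m + 1) + colPartial A (p + 1) (m + 2) :=
      cornerSum_succ_col A (p + 1) (m + 1)
    have hrp : rowPartial A (p + 1) (m + 1) = 0 := by omega
    have hcp : colPartial A (p + 1) (m + 1) = 0 := by omega
    have hrp1 : rowPartial A (p + 2) (m + 1) = 1 := by omega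
    have hcp1 : colPartial A (p + 1) (m + 2) = 1 := by omega
    refine ⟨(inDiagram_iff A hA hi1 (by omega) hj1 (by omega)).mpr ⟨hrp, hcp⟩, ?_, ?_⟩
    · intro hd'
      have h := (inDiagram_iff A hA (show 1 ≤ p + 2 by omega) (show p + 2 ≤ n by omega)
        hj1 (show m + 1 ≤ n by omega)).mp hd'
      omega
    · intro hd'
      have h := (inDiagram_iff A hA hi1 (show p + 1 ≤ n by omega)
        (show 1 ≤ m + 2 by omega) (show m + 2 ≤ n by omega)).mp hd'
      omega
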